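/- Let I ⊆ R = K[x,y,z] be the homogeneous ideal of 3 distinct points of P²_K lying on an irreducible conic, and let m be even. Then the least degree of a nonzero homogeneous element of I^{(m)} is 3m/2; that is, I^{(m)} contains no nonzero form of degree less than 3m/2, and contains a nonzero form of degree 3m/2. -/

import Mathlib

open MvPolynomial Pointwise

/-- The polynomial ring `K[x,y,z]`, with `x = X 0`, `y = X 1`, `z = X 2`. -/
abbrev R3 (K : Type*) [Field K] := MvPolynomial (Fin 3) K

/-- The homogeneous vanishing ideal of the point of `ℙ²` with homogeneous
coordinates `p`: all polynomials vanishing on the whole line spanned by `p`. -/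
noncomputable def pointIdeal {K : Type*} [Field K] (p : Fin 3 → K) : Ideal (R3 K) :=
  ⨅ c : K, RingHom.ker (MvPolynomial.eval (c • p))

/-- The `m`-th symbolic power `I^(m) = I_{p_1}^m ∩ ⋯ ∩ I_{p_r}^m` of the ideal of the
points `p 0, …, p (r-1)`. -/
noncomputable def symbIdeal {K : Type*} [Field K] {r : ℕ} (p : Fin r → (Fin 3 → K)) (m : ℕ) :
    Ideal (R3 K) :=
  ⨅ i, (pointIdeal (p i)) ^ m

/-- The `p i` are nonzero and pairwise represent distinct points of `ℙ²`. -/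
def ProjDistinct {K : Type*} [Field K] {r : ℕ} (p : Fin r → (Fin 3 → K)) : Prop :=
  (∀ i, p i ≠ 0) ∧ ∀ i j, i ≠ j → ∀ c : K, p i ≠ c • p j

/-- The points `p i` lie on an irreducible conic. -/
def OnIrreducibleConic {K : Type*} [Field K] {r : ℕ} (p : Fin r → (Fin 3 → K)) : Prop :=
  ∃ q : R3 K, q.IsHomogeneous 2 ∧ Irreducible q ∧ ∀ i, MvPolynomial.eval (p i) q = 0

/-- Graded reverse lexicographic order with `x > y > z`:  `a < b` iff `deg a < deg b`, or the
degrees agree and the last nonzero entry of `a - b` is positive. -/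
def RevLexLT (a b : Fin 3 →₀ ℕ) : Prop :=
  (∑ j, a j) < (∑ j, b j) ∨
    ((∑ j, a j) = (∑ j, b j) ∧ ∃ k : Fin 3, b k < a k ∧ ∀ j, k < j → a j = b j)

/-- `a` is the exponent of the leading monomial of `f` for revlex. -/
def IsLeadMonomial {K : Type*} [Field K] (f : R3 K) (a : Fin 3 →₀ ℕ) : Prop :=
  a ∈ f.support ∧ ∀ b ∈ f.support, b ≠ a → RevLexLT b a

/-- The initial ideal of `J` with respect to the revlex order: the monomial ideal generated by
the leading monomials of the nonzero elements of `J`. -/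
noncomputable def initialIdeal {K : Type*} [Field K] (J : Ideal (R3 K)) : Ideal (R3 K) :=
  Ideal.span {g | ∃ f ∈ J, ∃ a, IsLeadMonomial f a ∧ g = MvPolynomial.monomial a (1 : K)}

/-- The linear change of coordinates on `K[x,y,z]` given by a `3 × 3` matrix. -/
noncomputable def changeCoords {K : Type*} [Field K] (g : Matrix (Fin 3) (Fin 3) K) :
    R3 K →ₐ[K] R3 K :=
  MvPolynomial.aeval (fun i => ∑ j, MvPolynomial.C (g i j) * MvPolynomial.X j)

/-- `G` is the generic initial ideal of `J` for the revlex order: on a nonempty Zariski-open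
subset of `GL₃(K)` (the nonvanishing locus, in `GL₃(K)`, of a nonzero polynomial in the matrix
entries), the initial ideal of `g • J` is constantly `G`. -/
def IsGin {K : Type*} [Field K] (J G : Ideal (R3 K)) : Prop :=
  ∃ h : MvPolynomial (Fin 3 × Fin 3) K, h ≠ 0 ∧
    ∀ g : Matrix (Fin 3) (Fin 3) K, IsUnit g.det →
      MvPolynomial.eval (fun q => g q.1 q.2) h ≠ 0 →
      initialIdeal (Ideal.map (changeCoords g) J) = G

/-- The Newton polytope of a monomial ideal whose generators involve only `x` and `y`,
regarded as a subset of `ℝ² = ℝ × ℝ`: the convex hull of the exponent vectors `(a, b)` of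
the monomials `x^a y^b` lying in the ideal. -/
noncomputable def newton2 {K : Type*} [Field K] (G : Ideal (R3 K)) : Set (ℝ × ℝ) :=
  convexHull ℝ {v | ∃ a b : ℕ,
    MvPolynomial.monomial (Finsupp.single (0 : Fin 3) a + Finsupp.single (1 : Fin 3) b)
      (1 : K) ∈ G ∧ v = ((a : ℝ), (b : ℝ))}

/-- The limiting shape of a system of monomial ideals: the closure of the union of the
scaled Newton polytopes `(1/m) • P_{gins m}`, `m ≥ 1`. -/
noncomputable def limitingShape {K : Type*} [Field K] (gins : ℕ → Ideal (R3 K)) :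
    Set (ℝ × ℝ) :=
  closure (⋃ m : ℕ, (((m + 1 : ℕ) : ℝ))⁻¹ • newton2 (gins (m + 1)))

/-- `S` is the set of minimal generators of the ideal `G`. -/
def IsMinGenSet {K : Type*} [Field K] (S : Set (R3 K)) (G : Ideal (R3 K)) : Prop :=
  G = Ideal.span S ∧ ∀ f ∈ S, f ∉ Ideal.span (S \ {f})

/-- A minimal graded free resolution `0 → ⊕_{j : κ} R(-u j) → ⊕_{i : ι} R(-d i) → I → 0` of an
ideal `I ⊆ K[x,y,z]`, recorded concretely:  `f i` are the images of the basis of `F₀` (homogeneous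
of degree `d i`, generating `I`), and `M` is the matrix of the (injective) graded map `F₁ → F₀`,
whose columns generate the syzygies of the `f i`; minimality means that the entries of `M` lie in
the irrelevant maximal ideal, i.e. have vanishing constant term. -/
structure MinFreeRes {K : Type*} [Field K] (I : Ideal (R3 K)) (ι κ : Type)
    [Fintype ι] [Fintype κ] (d : ι → ℕ) (u : κ → ℕ) where
  f : ι → R3 K
  hf_deg : ∀ i, (f i).IsHomogeneous (d i)
  hf_mem : ∀ i, f i ∈ I
  hf_span : I = Ideal.span (Set.range f)
  M : ι → κ → R3 K
  hM_deg : ∀ i j, M i j = 0 ∨ (d i ≤ u j ∧ (M i j).IsHomogeneous (u j - d i))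
  hM_complex : ∀ j, ∑ i, M i j * f i = 0
  hM_exact : ∀ v : ι → R3 K, ∑ i, v i * f i = 0 →
    ∃ w : κ → R3 K, ∀ i, v i = ∑ j, M i j * w j
  hM_inj : ∀ w : κ → R3 K, (∀ i, ∑ j, M i j * w j = 0) → w = 0
  h_min : ∀ i j, MvPolynomial.coeff 0 (M i j) = 0

namespace SPIDaux

variable {K : Type*} [Field K]

noncomputable def ee (i : Fin 3) : Fin 3 → K := fun j => if j = i then 1 else 0

lemma eval_changeCoords (A : Matrix (Fin 3) (Fin 3) K) (v : Fin 3 → K) (f : R3 K) :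
    MvPolynomial.eval v (changeCoords A f) = MvPolynomial.eval (A.mulVec v) f := by
  have h : (MvPolynomial.eval v).comp (changeCoords A).toRingHom
      = MvPolynomial.eval (A.mulVec v) := by
    apply MvPolynomial.ringHom_ext
    · intro a; simp [changeCoords]
    · intro i; simp [changeCoords, Matrix.mulVec, dotProduct]
  exact RingHom.congr_fun h f

lemma changeCoords_changeCoords {A B : Matrix (Fin 3) (Fin 3) K} (h : B * A = 1) (f : R3 K) :
    changeCoords A (changeCoords B f) = f := by
  have hc : (changeCoords A).comp (changeCoords B) = AlgHom.id K (R3 K) := by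
    apply MvPolynomial.algHom_ext
    intro i
    simp only [AlgHom.comp_apply, changeCoords, aeval_X, map_sum, map_mul, aeval_C,
      algebraMap_eq, AlgHom.id_apply]
    have h1 : ∀ j k, (C (B i j) * (C (A j k) * X k) : R3 K) = C (B i j * A j k) * X k := by
      intro j k; rw [map_mul, mul_assoc]
    simp only [Finset.mul_sum, h1]
    rw [Finset.sum_comm]
    have h2 : ∀ k, (∑ j, C (B i j * A j k) * X k : R3 K) = C ((B * A) i k) * X k := by
      intro k
      rw [← Finset.sum_mul, ← map_sum, ← Matrix.mul_apply]
    simp only [h2, h, Matrix.one_apply]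
    simp [apply_ite]
  exact AlgHom.congr_fun hc f

lemma mem_pointIdeal {q : Fin 3 → K} {f : R3 K} :
    f ∈ pointIdeal q ↔ ∀ c : K, MvPolynomial.eval (c • q) f = 0 := by
  simp [pointIdeal, Ideal.mem_iInf, RingHom.mem_ker]

noncomputable def cc (A B : Matrix (Fin 3) (Fin 3) K) (hAB : A * B = 1) (hBA : B * A = 1) :
    R3 K ≃+* R3 K :=
  RingEquiv.ofRingHom (changeCoords B).toRingHom (changeCoords A).toRingHom
    (RingHom.ext fun f => changeCoords_changeCoords hAB f)
    (RingHom.ext fun f => changeCoords_changeCoords hBA f)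

lemma mem_pow_transport {A B : Matrix (Fin 3) (Fin 3) K} (hAB : A * B = 1) (hBA : B * A = 1)
    (q : Fin 3 → K) (m : ℕ) (f : R3 K) :
    f ∈ (pointIdeal q) ^ m ↔ changeCoords B f ∈ (pointIdeal (A.mulVec q)) ^ m := by
  set e : R3 K ≃+* R3 K := cc A B hAB hBA with he
  have hmap : Ideal.map (e : R3 K →+* R3 K) (pointIdeal q) = pointIdeal (A.mulVec q) := by
    ext x
    rw [Ideal.map_comap_of_equiv, Ideal.mem_comap, mem_pointIdeal, mem_pointIdeal]
    have hsymm : ∀ x' : R3 K, e.symm x' = changeCoords A x' := fun _ => rfl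
    constructor
    · intro h c
      have h2 := h c
      rw [hsymm, eval_changeCoords, Matrix.mulVec_smul] at h2
      exact h2
    · intro h c
      rw [hsymm, eval_changeCoords, Matrix.mulVec_smul]
      exact h c
  have hpow : (pointIdeal (A.mulVec q)) ^ m
      = Ideal.comap (e.symm : R3 K →+* R3 K) ((pointIdeal q) ^ m) := by
    rw [← hmap, ← Ideal.map_pow, Ideal.map_comap_of_equiv]
    rfl
  rw [hpow, Ideal.mem_comap]
  have h3 : (e.symm : R3 K →+* R3 K) (changeCoords B f) = f := e.symm_apply_apply f
  rw [h3]

def lowIdeal (i : Fin 3) (t : ℕ) : Ideal (R3 K) where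
  carrier := {f | ∀ d ∈ f.support, t ≤ ∑ j ∈ Finset.univ.erase i, d j}
  zero_mem' := by simp
  add_mem' := by
    intro a b ha hb d hd
    rcases Finset.mem_union.mp (MvPolynomial.support_add hd) with h | h
    exacts [ha d h, hb d h]
  smul_mem' := by
    intro c x hx d hd
    rw [smul_eq_mul] at hd
    obtain ⟨d1, hd1, d2, hd2, rfl⟩ := Finset.mem_add.mp (MvPolynomial.support_mul _ _ hd)
    calc t ≤ ∑ j ∈ Finset.univ.erase i, d2 j := hx d2 hd2
    _ ≤ ∑ j ∈ Finset.univ.erase i, (d1 + d2) j := Finset.sum_le_sum (fun j _ => by simp)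

lemma mem_lowIdeal {i : Fin 3} {t : ℕ} {f : R3 K} :
    f ∈ lowIdeal i t ↔ ∀ d ∈ f.support, t ≤ ∑ j ∈ Finset.univ.erase i, d j := Iff.rfl

lemma lowIdeal_mul {i : Fin 3} {s t : ℕ} {f g : R3 K} (hf : f ∈ lowIdeal i s)
    (hg : g ∈ lowIdeal i t) : f * g ∈ lowIdeal i (s + t) := by
  intro d hd
  obtain ⟨d1, hd1, d2, hd2, rfl⟩ := Finset.mem_add.mp (MvPolynomial.support_mul _ _ hd)
  have h : ∑ j ∈ Finset.univ.erase i, (d1 + d2) j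
      = (∑ j ∈ Finset.univ.erase i, d1 j) + ∑ j ∈ Finset.univ.erase i, d2 j := by
    simp [Finset.sum_add_distrib]
  rw [h]
  exact add_le_add (hf d1 hd1) (hg d2 hd2)

lemma pow_le_lowIdeal {i : Fin 3} {P : Ideal (R3 K)} (hP : P ≤ lowIdeal i 1) (m : ℕ) :
    P ^ m ≤ lowIdeal i m := by
  induction m with
  | zero => intro f _ d _; exact Nat.zero_le _
  | succ n ih =>
    rw [pow_succ]
    exact Ideal.mul_le.mpr fun r hr s hs => lowIdeal_mul (ih hr) (hP hs)

lemma prod_pure (i : Fin 3) (d : Fin 3 →₀ ℕ) (h : ∀ j, j ≠ i → d j = 0) :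
    ∏ j ∈ d.support, (if j = i then Polynomial.X else (0 : Polynomial K)) ^ d j
      = Polynomial.X ^ d i := by
  have hsub : d.support ⊆ {i} := fun j hj => Finset.mem_singleton.mpr (by
    by_contra hji; exact (Finsupp.mem_support_iff.mp hj) (h j hji))
  rcases Finset.subset_singleton_iff.mp hsub with h0 | h1
  · have hdi : d i = 0 := by
      have hd0 : d = 0 := Finsupp.support_eq_empty.mp h0
      rw [hd0]; rfl
    rw [h0, hdi]; simp
  · rw [h1, Finset.prod_singleton, if_pos rfl]

lemma pointIdeal_ee_le [Infinite K] (i : Fin 3) : pointIdeal (ee (K := K) i) ≤ lowIdeal i 1 := by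
  intro f hf
  rw [mem_lowIdeal]
  intro d hd
  by_contra hlt
  push_neg at hlt
  have hzero : ∀ j, j ≠ i → d j = 0 := by
    intro j hj
    have h0 : ∑ j ∈ Finset.univ.erase i, d j = 0 := by omega
    exact Finset.sum_eq_zero_iff.mp h0 j (Finset.mem_erase.mpr ⟨hj, Finset.mem_univ j⟩)
  set ψ : R3 K →ₐ[K] Polynomial K :=
    MvPolynomial.aeval (fun j => if j = i then Polynomial.X else 0) with hψdef
  have hev : ∀ c : K, Polynomial.eval c (ψ f) = MvPolynomial.eval (c • ee i) f := by
    intro c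
    have h : (Polynomial.evalRingHom c).comp ψ.toRingHom
        = (MvPolynomial.eval (c • ee i) : R3 K →+* K) := by
      apply MvPolynomial.ringHom_ext
      · intro a; simp [hψdef]
      · intro j
        by_cases hj : j = i <;>
          simp [hψdef, hj, ee, Pi.smul_apply, smul_eq_mul]
    exact RingHom.congr_fun h f
  have hψ0 : ψ f = 0 := by
    apply Polynomial.funext
    intro c
    rw [hev c, Polynomial.eval_zero]
    exact mem_pointIdeal.mp hf c
  have hrep : ψ f = ∑ d' ∈ f.support,
      Polynomial.C (MvPolynomial.coeff d' f) *
        ∏ j ∈ d'.support, (if j = i then Polynomial.X else (0 : Polynomial K)) ^ d' j := by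
    conv_lhs => rw [f.as_sum]
    rw [map_sum]
    refine Finset.sum_congr rfl fun d' _ => ?_
    rw [hψdef, aeval_monomial]
    congr 1
  have hcoeff : (ψ f).coeff (d i) = MvPolynomial.coeff d f := by
    rw [hrep, Polynomial.finset_sum_coeff]
    rw [Finset.sum_eq_single d]
    · rw [prod_pure i d hzero, Polynomial.coeff_C_mul, Polynomial.coeff_X_pow, if_pos rfl,
        mul_one]
    · intro d' hd' hne
      by_cases hsing : ∀ j, j ≠ i → d' j = 0
      · have hii : d' i ≠ d i := by
          intro hieq
          apply hne
          ext j
          by_cases hj : j = i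
          · rw [hj]; exact hieq
          · rw [hsing j hj, hzero j hj]
        rw [prod_pure i d' hsing, Polynomial.coeff_C_mul, Polynomial.coeff_X_pow,
          if_neg (fun h => hii h.symm), mul_zero]
      · push_neg at hsing
        obtain ⟨j, hji, hj0⟩ := hsing
        have hjmem : j ∈ d'.support := Finsupp.mem_support_iff.mpr hj0
        have hz : (if j = i then Polynomial.X else (0 : Polynomial K)) ^ d' j = 0 := by
          rw [if_neg hji]; exact zero_pow hj0
        rw [Finset.prod_eq_zero hjmem hz, mul_zero, Polynomial.coeff_zero]
    · intro hnd; exact absurd hd hnd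
  rw [hψ0, Polynomial.coeff_zero] at hcoeff
  exact (MvPolynomial.mem_support_iff.mp hd) hcoeff.symm

lemma degree_fin3 (d : Fin 3 →₀ ℕ) : d.degree = d 0 + d 1 + d 2 := by
  rw [Finsupp.degree_apply]
  rw [Finset.sum_subset (Finset.subset_univ _) (fun x _ hx => Finsupp.notMem_support_iff.mp hx)]
  exact Fin.sum_univ_three d

lemma homog_support_deg {f : R3 K} {n : ℕ} (hf : f.IsHomogeneous n) {d : Fin 3 →₀ ℕ}
    (hd : d ∈ f.support) : d 0 + d 1 + d 2 = n := by
  rw [← degree_fin3]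
  by_contra h
  exact MvPolynomial.mem_support_iff.mp hd (hf.coeff_eq_zero h)

lemma changeCoords_isHomogeneous (A : Matrix (Fin 3) (Fin 3) K) {f : R3 K} {n : ℕ}
    (hf : f.IsHomogeneous n) : (changeCoords A f).IsHomogeneous n := by
  have h := hf.aeval (fun i => ∑ j, C (A i j) * X j)
      (fun i => IsHomogeneous.sum _ _ _ fun j _ => isHomogeneous_C_mul_X _ _)
  simpa [changeCoords] using h

lemma not_isUnit_of_homog {f : R3 K} {n : ℕ} (hf : f.IsHomogeneous n) (hn : n ≠ 0) :
    ¬ IsUnit f := by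
  intro hu
  obtain ⟨v, hv⟩ := hu.exists_right_inv
  have h1 := congrArg (MvPolynomial.constantCoeff : R3 K →+* K) hv
  rw [map_mul, map_one] at h1
  have h2 : MvPolynomial.constantCoeff f = 0 := by
    rw [MvPolynomial.constantCoeff_eq]
    exact hf.coeff_eq_zero (by simpa using (Ne.symm hn))
  rw [h2, zero_mul] at h1
  exact zero_ne_one h1

lemma exists_third (v w : Fin 3 → K) (hv : v ≠ 0) (hw : ∀ c : K, w ≠ c • v) :
    ∃ u : Fin 3 → K, IsUnit (Matrix.of ![v, w, u]).det := by
  by_cases hmin : ∃ j k : Fin 3, v j * w k ≠ v k * w j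
  · obtain ⟨j, k, hjk⟩ := hmin
    fin_cases j <;> fin_cases k
    · exact absurd rfl hjk
    · refine ⟨![0,0,1], ?_⟩
      replace hjk : v 0 * w 1 ≠ v 1 * w 0 := by simpa using hjk
      rw [isUnit_iff_ne_zero, Matrix.det_fin_three]
      simp only [Matrix.of_apply, Matrix.cons_val', Matrix.cons_val_zero, Matrix.cons_val_one,
        Matrix.head_cons, Matrix.cons_val_two, Matrix.tail_cons, Matrix.empty_val',
        Matrix.cons_val_fin_one, Matrix.head_fin_const]
      intro h; apply hjk; first | linear_combination h | linear_combination -h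
    · refine ⟨![0,1,0], ?_⟩
      replace hjk : v 0 * w 2 ≠ v 2 * w 0 := by simpa using hjk
      rw [isUnit_iff_ne_zero, Matrix.det_fin_three]
      simp only [Matrix.of_apply, Matrix.cons_val', Matrix.cons_val_zero, Matrix.cons_val_one,
        Matrix.head_cons, Matrix.cons_val_two, Matrix.tail_cons, Matrix.empty_val',
        Matrix.cons_val_fin_one, Matrix.head_fin_const]
      intro h; apply hjk; first | linear_combination h | linear_combination -h
    · refine ⟨![0,0,1], ?_⟩
      replace hjk : v 1 * w 0 ≠ v 0 * w 1 := by simpa using hjk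
      rw [isUnit_iff_ne_zero, Matrix.det_fin_three]
      simp only [Matrix.of_apply, Matrix.cons_val', Matrix.cons_val_zero, Matrix.cons_val_one,
        Matrix.head_cons, Matrix.cons_val_two, Matrix.tail_cons, Matrix.empty_val',
        Matrix.cons_val_fin_one, Matrix.head_fin_const]
      intro h; apply hjk; first | linear_combination h | linear_combination -h
    · exact absurd rfl hjk
    · refine ⟨![1,0,0], ?_⟩
      replace hjk : v 1 * w 2 ≠ v 2 * w 1 := by simpa using hjk
      rw [isUnit_iff_ne_zero, Matrix.det_fin_three]
      simp only [Matrix.of_apply, Matrix.cons_val', Matrix.cons_val_zero, Matrix.cons_val_one,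
        Matrix.head_cons, Matrix.cons_val_two, Matrix.tail_cons, Matrix.empty_val',
        Matrix.cons_val_fin_one, Matrix.head_fin_const]
      intro h; apply hjk; first | linear_combination h | linear_combination -h
    · refine ⟨![0,1,0], ?_⟩
      replace hjk : v 2 * w 0 ≠ v 0 * w 2 := by simpa using hjk
      rw [isUnit_iff_ne_zero, Matrix.det_fin_three]
      simp only [Matrix.of_apply, Matrix.cons_val', Matrix.cons_val_zero, Matrix.cons_val_one,
        Matrix.head_cons, Matrix.cons_val_two, Matrix.tail_cons, Matrix.empty_val',
        Matrix.cons_val_fin_one, Matrix.head_fin_const]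
      intro h; apply hjk; first | linear_combination h | linear_combination -h
    · refine ⟨![1,0,0], ?_⟩
      replace hjk : v 2 * w 1 ≠ v 1 * w 2 := by simpa using hjk
      rw [isUnit_iff_ne_zero, Matrix.det_fin_three]
      simp only [Matrix.of_apply, Matrix.cons_val', Matrix.cons_val_zero, Matrix.cons_val_one,
        Matrix.head_cons, Matrix.cons_val_two, Matrix.tail_cons, Matrix.empty_val',
        Matrix.cons_val_fin_one, Matrix.head_fin_const]
      intro h; apply hjk; first | linear_combination h | linear_combination -h
    · exact absurd rfl hjk
  · push_neg at hmin
    obtain ⟨j, hj⟩ : ∃ j, v j ≠ 0 := by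
      by_contra hall; push_neg at hall
      exact hv (funext fun j => hall j)
    exfalso
    apply hw (w j / v j)
    funext k
    have h := hmin k j
    rw [Pi.smul_apply, smul_eq_mul, div_mul_eq_mul_div, eq_div_iff hj]
    linear_combination -h

/-- auxiliary normal form for exponents -/
noncomputable def D3 (a b c : ℕ) : Fin 3 →₀ ℕ :=
  Finsupp.single 0 a + Finsupp.single 1 b + Finsupp.single 2 c

lemma D3_apply (a b c : ℕ) (j : Fin 3) :
    D3 a b c j = if j = 0 then a else if j = 1 then b else c := by
  fin_cases j <;> simp [D3, Finsupp.single_apply]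

lemma eq_D3 (d : Fin 3 →₀ ℕ) : d = D3 (d 0) (d 1) (d 2) := by
  ext j; fin_cases j <;> simp [D3, Finsupp.single_apply]

lemma conic_span_false {p : Fin 3 → (Fin 3 → K)} (hdist : ProjDistinct p)
    (hconic : OnIrreducibleConic p) (a b : K) (hab : p 2 = a • p 0 + b • p 1) : False := by
  obtain ⟨hnz, hpair⟩ := hdist
  have ha : a ≠ 0 := by
    rintro rfl
    apply hpair 2 1 (by decide) b
    rw [hab]; funext j; simp
  have hb : b ≠ 0 := by
    rintro rfl
    apply hpair 2 0 (by decide) a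
    rw [hab]; funext j; simp
  obtain ⟨u, hu⟩ := exists_third (p 0) (p 1) (hnz 0) (fun c => hpair 1 0 (by decide) c)
  set M : Matrix (Fin 3) (Fin 3) K := Matrix.of ![p 0, p 1, u] with hM
  obtain ⟨q, hq2, hqirr, hqv⟩ := hconic
  set Q : R3 K := changeCoords M.transpose q with hQ
  have hQ2 : Q.IsHomogeneous 2 := changeCoords_isHomogeneous _ hq2
  have hev : ∀ v : Fin 3 → K, MvPolynomial.eval v Q
      = MvPolynomial.eval (fun j => v 0 * p 0 j + v 1 * p 1 j + v 2 * u j) q := by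
    intro v
    rw [hQ, eval_changeCoords]
    have hv : M.transpose.mulVec v = fun j => v 0 * p 0 j + v 1 * p 1 j + v 2 * u j := by
      funext j
      simp only [Matrix.mulVec, dotProduct, Matrix.transpose_apply, Fin.sum_univ_three]
      simp [hM]
      ring
    rw [hv]
  have e0 : MvPolynomial.eval (![1,0,0] : Fin 3 → K) Q = 0 := by
    rw [hev]
    have h : (fun j => (![1,0,0] : Fin 3 → K) 0 * p 0 j + ![1,0,0] 1 * p 1 j
        + ![1,0,0] 2 * u j) = p 0 := by funext j; simp
    rw [h]; exact hqv 0
  have e1 : MvPolynomial.eval (![0,1,0] : Fin 3 → K) Q = 0 := by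
    rw [hev]
    have h : (fun j => (![0,1,0] : Fin 3 → K) 0 * p 0 j + ![0,1,0] 1 * p 1 j
        + ![0,1,0] 2 * u j) = p 1 := by funext j; simp
    rw [h]; exact hqv 1
  have e2 : MvPolynomial.eval (![a,b,0] : Fin 3 → K) Q = 0 := by
    rw [hev]
    have h : (fun j => (![a,b,0] : Fin 3 → K) 0 * p 0 j + ![a,b,0] 1 * p 1 j
        + ![a,b,0] 2 * u j) = p 2 := by
      funext j; rw [hab]; simp
    rw [h]; exact hqv 2
  have hcand : ∀ d ∈ Q.support, d 2 = 0 → d = D3 2 0 0 ∨ d = D3 1 1 0 ∨ d = D3 0 2 0 := by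
    intro d hd h2
    have hs := homog_support_deg hQ2 hd
    have h0 := eq_D3 d
    rcases Nat.lt_or_ge (d 0) 1 with hc | hc
    · right; right; rw [h0]
      have : d 0 = 0 := by omega
      rw [this, h2]
      congr 1; omega
    rcases Nat.lt_or_ge (d 0) 2 with hc' | hc'
    · right; left; rw [h0]
      have h00 : d 0 = 1 := by omega
      rw [h00, h2]
      congr 1; omega
    · left; rw [h0]
      have h00 : d 0 = 2 := by omega
      rw [h00, h2]
      congr 1; omega
  have c20 : MvPolynomial.coeff (D3 2 0 0) Q = 0 := by
    by_cases hmem : D3 2 0 0 ∈ Q.support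
    · rw [MvPolynomial.eval_eq', Finset.sum_eq_single_of_mem _ hmem] at e0
      · rw [Fin.prod_univ_three] at e0
        simpa [D3_apply] using e0
      · intro d hd hne
        have hs := homog_support_deg hQ2 hd
        rw [Fin.prod_univ_three]
        rcases Nat.eq_zero_or_pos (d 1) with h1 | h1
        · rcases Nat.eq_zero_or_pos (d 2) with h2 | h2
          · exfalso; apply hne
            rw [eq_D3 d, h1, h2]
            congr 1; omega
          · simp [zero_pow (Nat.pos_iff_ne_zero.mp h2)]
        · simp [zero_pow (Nat.pos_iff_ne_zero.mp h1)]
    · exact MvPolynomial.notMem_support_iff.mp hmem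
  have c02 : MvPolynomial.coeff (D3 0 2 0) Q = 0 := by
    by_cases hmem : D3 0 2 0 ∈ Q.support
    · rw [MvPolynomial.eval_eq', Finset.sum_eq_single_of_mem _ hmem] at e1
      · rw [Fin.prod_univ_three] at e1
        simpa [D3_apply] using e1
      · intro d hd hne
        have hs := homog_support_deg hQ2 hd
        rw [Fin.prod_univ_three]
        rcases Nat.eq_zero_or_pos (d 0) with h1 | h1
        · rcases Nat.eq_zero_or_pos (d 2) with h2 | h2
          · exfalso; apply hne
            rw [eq_D3 d, h1, h2]
            congr 1; omega
          · simp [zero_pow (Nat.pos_iff_ne_zero.mp h2)]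
        · simp [zero_pow (Nat.pos_iff_ne_zero.mp h1)]
    · exact MvPolynomial.notMem_support_iff.mp hmem
  have c11 : MvPolynomial.coeff (D3 1 1 0) Q = 0 := by
    by_cases hmem : D3 1 1 0 ∈ Q.support
    · rw [MvPolynomial.eval_eq', Finset.sum_eq_single_of_mem _ hmem] at e2
      · rw [Fin.prod_univ_three] at e2
        simp [D3_apply] at e2
        rcases e2 with h | h | h
        · exact h
        · exact absurd h ha
        · exact absurd h hb
      · intro d hd hne
        rw [Fin.prod_univ_three]
        rcases Nat.eq_zero_or_pos (d 2) with h2 | h2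
        · rcases hcand d hd h2 with rfl | rfl | rfl
          · rw [c20]; ring
          · exact absurd rfl hne
          · rw [c02]; ring
        · simp [zero_pow (Nat.pos_iff_ne_zero.mp h2)]
    · exact MvPolynomial.notMem_support_iff.mp hmem
  have hQpos : ∀ d ∈ Q.support, 0 < d 2 := by
    intro d hd
    rcases Nat.eq_zero_or_pos (d 2) with h2 | h2
    · exfalso
      have hc := MvPolynomial.mem_support_iff.mp hd
      rcases hcand d hd h2 with rfl | rfl | rfl
      exacts [hc c20, hc c11, hc c02]
    · exact h2
  set Q' : R3 K := ∑ d ∈ Q.support, monomial (d - Finsupp.single 2 1) (MvPolynomial.coeff d Q)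
    with hQ'def
  have hfact : Q = X 2 * Q' := by
    rw [hQ'def, Finset.mul_sum]
    conv_lhs => rw [Q.as_sum]
    refine Finset.sum_congr rfl fun d hd => ?_
    have hX2 : (X 2 : R3 K) = monomial (Finsupp.single 2 1) 1 := rfl
    rw [hX2, MvPolynomial.monomial_mul, one_mul]
    have hds : Finsupp.single 2 1 + (d - Finsupp.single 2 1) = d := by
      have hdd := hQpos d hd
      ext j
      rcases eq_or_ne j 2 with rfl | hj
      · simp only [Finsupp.add_apply, Finsupp.tsub_apply, Finsupp.single_apply, if_pos rfl, if_true]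
        omega
      · simp only [Finsupp.add_apply, Finsupp.tsub_apply, Finsupp.single_apply,
          if_neg (Ne.symm hj)]
        omega
    rw [hds]
  have hQ'1 : Q'.IsHomogeneous 1 := by
    rw [hQ'def]
    apply IsHomogeneous.sum
    intro d hd
    apply isHomogeneous_monomial
    have h2 := hQpos d hd
    have h3 := homog_support_deg hQ2 hd
    have e0 : (Finsupp.single (2 : Fin 3) 1) 0 = 0 := Finsupp.single_eq_of_ne (by decide)
    have e1 : (Finsupp.single (2 : Fin 3) 1) 1 = 0 := Finsupp.single_eq_of_ne (by decide)
    have e2 : (Finsupp.single (2 : Fin 3) 1) 2 = 1 := Finsupp.single_eq_same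
    rw [degree_fin3, Finsupp.tsub_apply, Finsupp.tsub_apply, Finsupp.tsub_apply, e0, e1, e2]
    omega
  have hback : q = changeCoords (M⁻¹).transpose (X 2) * changeCoords (M⁻¹).transpose Q' := by
    have h1 : M.transpose * (M⁻¹).transpose = 1 := by
      rw [← Matrix.transpose_mul, Matrix.nonsing_inv_mul M hu, Matrix.transpose_one]
    have h2 : q = changeCoords (M⁻¹).transpose Q := (changeCoords_changeCoords h1 q).symm
    rw [h2, hfact, map_mul]
  rcases hqirr.isUnit_or_isUnit hback with hF | hG
  · exact not_isUnit_of_homog (changeCoords_isHomogeneous _ (isHomogeneous_X K 2)) one_ne_zero hF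
  · exact not_isUnit_of_homog (changeCoords_isHomogeneous _ hQ'1) one_ne_zero hG

end SPIDaux

/-- For the ideal `I` of `3` points on an irreducible conic and `m` even, the least degree of
a nonzero homogeneous element of `I^(m)` is `3m/2`. -/
theorem symbolic_power_initial_degree_three_points {K : Type*} [Field K] [IsAlgClosed K]
    (p : Fin 3 → (Fin 3 → K))
    (hdist : ProjDistinct p) (hconic : OnIrreducibleConic p)
    (m : ℕ) (hm : 1 ≤ m) (hme : Even m) :
    (∃ f ∈ symbIdeal p m, f ≠ 0 ∧ MvPolynomial.IsHomogeneous f (3 * m / 2)) ∧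
    (∀ f ∈ symbIdeal p m, f ≠ 0 → ∀ k : ℕ, MvPolynomial.IsHomogeneous f k → 3 * m / 2 ≤ k) := by
  classical
  set N : Matrix (Fin 3) (Fin 3) K := Matrix.of (fun i j => p i j) with hN
  have hdet : IsUnit N.det := by
    rw [isUnit_iff_ne_zero]
    intro hdet0
    obtain ⟨v, hv0, hv⟩ := Matrix.exists_vecMul_eq_zero_iff.mpr hdet0
    have hrel : ∀ j, v 0 * p 0 j + v 1 * p 1 j + v 2 * p 2 j = 0 := by
      intro j
      have h := congrFun hv j
      simpa [hN, Matrix.vecMul, dotProduct, Fin.sum_univ_three] using h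
    rcases eq_or_ne (v 2) 0 with h2 | h2
    · rcases eq_or_ne (v 1) 0 with h1 | h1
      · rcases eq_or_ne (v 0) 0 with h0 | h0
        · apply hv0; funext i; fin_cases i <;> assumption
        · apply hdist.1 0
          funext j
          have h := hrel j; rw [h1, h2] at h
          simp only [zero_mul, add_zero] at h
          rcases mul_eq_zero.mp h with h' | h'
          · exact absurd h' h0
          · exact h'
      · apply hdist.2 1 0 (by decide) (-(v 0)/(v 1))
        funext j
        have h := hrel j; rw [h2] at h
        simp only [zero_mul, add_zero] at h
        simp only [Pi.smul_apply, smul_eq_mul]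
        field_simp
        first
          | linear_combination h | linear_combination -h | linear_combination (1 + v 1) * h
          | linear_combination -(1 + v 1) * h | linear_combination v 1 * h
    · refine SPIDaux.conic_span_false hdist hconic (-(v 0)/(v 2)) (-(v 1)/(v 2)) ?_
      funext j
      have h := hrel j
      simp only [Pi.add_apply, Pi.smul_apply, smul_eq_mul]
      field_simp
      first
        | linear_combination h | linear_combination -h | linear_combination (1 + v 2) * h
        | linear_combination -(1 + v 2) * h | linear_combination v 2 * h
  set A : Matrix (Fin 3) (Fin 3) K := (N⁻¹).transpose with hA
  set B : Matrix (Fin 3) (Fin 3) K := N.transpose with hB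
  have hAB : A * B = 1 := by
    rw [hA, hB, ← Matrix.transpose_mul, Matrix.mul_nonsing_inv N hdet, Matrix.transpose_one]
  have hBA : B * A = 1 := by
    rw [hA, hB, ← Matrix.transpose_mul, Matrix.nonsing_inv_mul N hdet, Matrix.transpose_one]
  have hAp : ∀ i, A.mulVec (p i) = (SPIDaux.ee i : Fin 3 → K) := by
    intro i; funext j
    have h : A.mulVec (p i) j = ∑ k, N⁻¹ k j * p i k := by
      simp [hA, Matrix.mulVec, dotProduct, Matrix.transpose_apply]
    have h2 : ∑ k, N⁻¹ k j * p i k = (N * N⁻¹) i j := by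
      rw [Matrix.mul_apply]
      refine Finset.sum_congr rfl fun k _ => ?_
      rw [hN]; simp [Matrix.of_apply]; ring
    rw [h, h2, Matrix.mul_nonsing_inv N hdet]
    by_cases hij : i = j
    · subst hij; simp [SPIDaux.ee, Matrix.one_apply]
    · simp [SPIDaux.ee, Matrix.one_apply, hij, Ne.symm hij]
  have hmem : ∀ f : R3 K, f ∈ symbIdeal p m ↔
      ∀ i : Fin 3, changeCoords B f ∈ (pointIdeal (SPIDaux.ee i : Fin 3 → K)) ^ m := by
    intro f
    rw [symbIdeal, Ideal.mem_iInf]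
    refine forall_congr' fun i => ?_
    rw [SPIDaux.mem_pow_transport hAB hBA (p i) m f, hAp i]
  obtain ⟨t, ht⟩ := hme
  constructor
  · -- existence
    have h32 : 3 * m / 2 = 3 * t := by omega
    set g : R3 K := (X 0 * X 1 * X 2) ^ t with hg
    have hgmem : ∀ i : Fin 3, g ∈ (pointIdeal (SPIDaux.ee i : Fin 3 → K)) ^ m := by
      intro i
      have hX : ∀ j, j ≠ i → (X j : R3 K) ∈ pointIdeal (SPIDaux.ee i : Fin 3 → K) := by
        intro j hj
        rw [SPIDaux.mem_pointIdeal]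
        intro c
        simp [SPIDaux.ee, hj, Pi.smul_apply]
      obtain ⟨a, b, hab, hset⟩ := Finset.card_eq_two.mp (show (Finset.univ.erase i).card = 2 by
        rw [Finset.card_erase_of_mem (Finset.mem_univ i), Finset.card_univ]; rfl)
      have ha : a ≠ i := by
        have : a ∈ Finset.univ.erase i := by rw [hset]; exact Finset.mem_insert_self a {b}
        exact (Finset.mem_erase.mp this).1
      have hb : b ≠ i := by
        have : b ∈ Finset.univ.erase i := by
          rw [hset]; exact Finset.mem_insert_of_mem (Finset.mem_singleton_self b)
        exact (Finset.mem_erase.mp this).1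
      have hprod : (X 0 * X 1 * X 2 : R3 K) = X i * (X a * X b) := by
        have h1 : (X 0 * X 1 * X 2 : R3 K) = ∏ l, X l := (Fin.prod_univ_three _).symm
        rw [h1, ← Finset.mul_prod_erase _ _ (Finset.mem_univ i), hset, Finset.prod_pair hab]
      rw [hg, hprod, ht]
      have h1 : (X a * X b : R3 K) ∈ (pointIdeal (SPIDaux.ee i : Fin 3 → K)) ^ 2 := by
        rw [sq]; exact Ideal.mul_mem_mul (hX a ha) (hX b hb)
      have h2 := Ideal.pow_mem_pow h1 t
      rw [← pow_mul] at h2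
      have h3 : 2 * t = t + t := by omega
      rw [h3] at h2
      have h4 : (X i * (X a * X b) : R3 K) ^ t = (X a * X b) ^ t * (X i) ^ t := by ring
      rw [h4]
      exact Ideal.mul_mem_right _ _ h2
    refine ⟨changeCoords A g, ?_, ?_, ?_⟩
    · rw [hmem]
      intro i
      rw [show changeCoords B (changeCoords A g) = g from SPIDaux.changeCoords_changeCoords hAB g]
      exact hgmem i
    · intro h0
      have hz : changeCoords B (changeCoords A g) = 0 := by rw [h0, map_zero]
      rw [SPIDaux.changeCoords_changeCoords hAB] at hz
      have hgne : g ≠ 0 := by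
        apply pow_ne_zero
        exact mul_ne_zero (mul_ne_zero (MvPolynomial.X_ne_zero _) (MvPolynomial.X_ne_zero _))
          (MvPolynomial.X_ne_zero _)
      exact hgne hz
    · rw [h32]
      apply SPIDaux.changeCoords_isHomogeneous
      have h3 : ((X 0 * X 1 * X 2 : R3 K)).IsHomogeneous 3 := by
        have := ((isHomogeneous_X K (0 : Fin 3)).mul (isHomogeneous_X K 1)).mul
          (isHomogeneous_X K 2)
        simpa using this
      simpa [hg] using h3.pow t
  · -- lower bound
    intro f hfI hf0 k hfk
    rw [hmem] at hfI
    set g' : R3 K := changeCoords B f with hg'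
    have hg0 : g' ≠ 0 := by
      intro h
      apply hf0
      have hid := SPIDaux.changeCoords_changeCoords hBA f
      rw [← hid, ← hg', h, map_zero]
    have hgk : g'.IsHomogeneous k := SPIDaux.changeCoords_isHomogeneous B hfk
    obtain ⟨d, hd⟩ := MvPolynomial.support_nonempty.mpr hg0
    have hdeg := SPIDaux.homog_support_deg hgk hd
    have hlow : ∀ i : Fin 3, m ≤ ∑ j ∈ Finset.univ.erase i, d j := by
      intro i
      exact SPIDaux.mem_lowIdeal.mp
        (SPIDaux.pow_le_lowIdeal (SPIDaux.pointIdeal_ee_le i) m (hfI i)) d hd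
    have hs0 : (∑ j ∈ Finset.univ.erase (0 : Fin 3), d j) + d 0 = k := by
      rw [Finset.sum_erase_add _ _ (Finset.mem_univ _), Fin.sum_univ_three]
      exact hdeg
    have hs1 : (∑ j ∈ Finset.univ.erase (1 : Fin 3), d j) + d 1 = k := by
      rw [Finset.sum_erase_add _ _ (Finset.mem_univ _), Fin.sum_univ_three]
      exact hdeg
    have hs2 : (∑ j ∈ Finset.univ.erase (2 : Fin 3), d j) + d 2 = k := by
      rw [Finset.sum_erase_add _ _ (Finset.mem_univ _), Fin.sum_univ_three]
      exact hdeg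
    have h0 := hlow 0
    have h1 := hlow 1
    have h2 := hlow 2
    omega
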